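/- For every s > 0, f''(s) + s·f'''(s) − s·(f''(s))² / f'(s) < 0. -/

import Mathlib

open Real

noncomputable def fFJ (α β : ℝ) (s : ℝ) : ℝ :=
  (1 / ((β + 1) * α ^ β)) * ∫ x in (0:ℝ)..s, ((α + Real.log (1 + x)) ^ (β + 1) - α ^ (β + 1)) / x

open Filter Set MeasureTheory intervalIntegral
-- generic Bernoulli consequences
lemma bern_lower {a x p : ℝ} (ha : 0 < a) (hx : 0 ≤ x) (hp : 0 ≤ p) :
    a ^ (p+1) + (p+1) * x * a ^ p ≤ (a + x) ^ (p+1) := by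
  have h1 : (1:ℝ) + (p+1) * (x/a) ≤ (1 + x/a) ^ (p+1) :=
    one_add_mul_self_le_rpow_one_add (by nlinarith [div_nonneg hx ha.le]) (by linarith)
  have h2 : (a + x) ^ (p+1) = a ^ (p+1) * (1 + x/a) ^ (p+1) := by
    rw [← Real.mul_rpow ha.le (by positivity)]
    congr 1; field_simp
  rw [h2]
  have h3 : a ^ (p+1) * (1 + (p+1) * (x/a)) ≤ a ^ (p+1) * (1 + x/a) ^ (p+1) :=
    mul_le_mul_of_nonneg_left h1 (by positivity)
  calc a ^ (p+1) + (p+1) * x * a ^ p = a ^ (p+1) * (1 + (p+1) * (x/a)) := by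
        rw [Real.rpow_add_one ha.ne']
        field_simp
    _ ≤ _ := h3

lemma bern_upper {a b p : ℝ} (hb : 0 ≤ b) (hba : b ≤ a) (ha : 0 < a) (hp : 0 ≤ p) :
    a ^ (p+1) - b ^ (p+1) ≤ (p+1) * (a - b) * a ^ p := by
  have h1 : (1:ℝ) + (p+1) * (b/a - 1) ≤ (1 + (b/a - 1)) ^ (p+1) :=
    one_add_mul_self_le_rpow_one_add (by
      have : 0 ≤ b/a := by positivity
      linarith) (by linarith)
  have h2 : ((1:ℝ) + (b/a - 1)) ^ (p+1) = b ^ (p+1) / a ^ (p+1) := by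
    rw [show (1:ℝ) + (b/a -1) = b/a by ring, Real.div_rpow hb ha.le]
  rw [h2] at h1
  have hap : (0:ℝ) < a ^ (p+1) := by positivity
  have h3 := mul_le_mul_of_nonneg_right h1 hap.le
  rw [div_mul_cancel₀ _ hap.ne'] at h3
  have h4 : (1 + (p+1) * (b/a - 1)) * a ^ (p+1)
      = a ^ (p+1) + (p+1) * (b - a) * a ^ p := by
    rw [Real.rpow_add_one ha.ne']
    field_simp
  rw [h4] at h3
  nlinarith [h3]
section
variable {α β : ℝ}

-- ψ lemma : α * exp (β*L/α) < exp L * (α + L - 1) + 1 for L > 0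
lemma psi_lemma (hβ : 0 ≤ β) (hαβ : β < α) {L : ℝ} (hL : 0 < L) :
    α * Real.exp (β * L / α) < Real.exp L * (α + L - 1) + 1 := by
  have hα : 0 < α := lt_of_le_of_lt hβ hαβ
  set ψ : ℝ → ℝ := fun L => Real.exp L * (α + L - 1) + 1 - α * Real.exp (β * L / α) with hψ
  have hd : ∀ x : ℝ, HasDerivAt ψ (Real.exp x * (α + x) - β * Real.exp (β * x / α)) x := by
    intro x
    have h1 : HasDerivAt (fun y : ℝ => Real.exp y * (α + y - 1))
        (Real.exp x * (α + x - 1) + Real.exp x * 1) x :=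
      (Real.hasDerivAt_exp x).mul (((hasDerivAt_id x).const_add α).sub_const 1)
    have h2 : HasDerivAt (fun y : ℝ => β * y / α) (β / α) x := by
      simpa using (((hasDerivAt_id x).const_mul β).div_const α)
    have h3 : HasDerivAt (fun y : ℝ => α * Real.exp (β * y / α))
        (α * (Real.exp (β * x / α) * (β / α))) x := (h2.exp).const_mul α
    have := (h1.add_const 1).sub h3
    refine this.congr_deriv ?_
    field_simp
    ring
  have hmono : StrictMonoOn ψ (Ici (0:ℝ)) := by
    apply strictMonoOn_of_deriv_pos (convex_Ici 0)
    · exact (Continuous.continuousOn (by continuity))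
    · intro x hx
      rw [interior_Ici] at hx
      rw [(hd x).deriv]
      have hxx : (0:ℝ) < x := hx
      have h4 : Real.exp (β * x / α) ≤ Real.exp x := by
        apply Real.exp_le_exp.mpr
        rw [div_le_iff₀ hα]
        nlinarith
      nlinarith [Real.exp_pos (β * x / α), Real.exp_pos x]
  have h0 : ψ 0 = 0 := by simp [hψ]
  have := hmono (le_refl (0:ℝ) : (0:ℝ) ∈ Ici (0:ℝ)) (le_of_lt hL : L ∈ Ici (0:ℝ)) hL
  rw [h0] at this
  simp only [hψ] at this
  linarith

section
variable {α β : ℝ}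

lemma amgm (hβ : 0 ≤ β) (hαβ : β < α) {L : ℝ} (hL : 0 ≤ L) :
    (β+1) * α ^ β * (α + L) ≤ (α + L) ^ (β+1) + β * α ^ (β+1) := by
  have hα : 0 < α := lt_of_le_of_lt hβ hαβ
  have h1 := bern_lower hα hL hβ
  have h2 : α ^ (β+1) = α ^ β * α := Real.rpow_add_one hα.ne' β
  nlinarith [h1, h2]

lemma claimC (hβ : 0 ≤ β) (hαβ : β < α) {L : ℝ} (hL : 0 < L) :
    α ^ (1-β) * (α + L) ^ β < Real.exp L * (α + L - 1) + 1 := by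
  have hα : 0 < α := lt_of_le_of_lt hβ hαβ
  have hv : 0 < α + L := by linarith
  have key : α ^ (1-β) * (α + L) ^ β ≤ α * Real.exp (β * L / α) := by
    have e1 : (α + L) ^ β = α ^ β * (1 + L/α) ^ β := by
      rw [← Real.mul_rpow hα.le (by positivity)]
      congr 1; field_simp
    have e2 : ((1:ℝ) + L/α) ^ β = Real.exp (Real.log (1 + L/α) * β) :=
      Real.rpow_def_of_pos (by positivity) β
    have e3 : Real.log (1 + L/α) ≤ L/α := by
      have := Real.log_le_sub_one_of_pos (show (0:ℝ) < 1 + L/α by positivity)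
      linarith
    have e4 : Real.exp (Real.log (1 + L/α) * β) ≤ Real.exp (β * L / α) := by
      apply Real.exp_le_exp.mpr
      rw [mul_comm, mul_div_assoc]
      exact mul_le_mul_of_nonneg_left e3 hβ
    have e5 : α ^ (1-β) * α ^ β = α := by
      rw [← Real.rpow_add hα]; norm_num
    calc α ^ (1-β) * (α + L) ^ β = α * (1 + L/α) ^ β := by
          rw [e1, ← mul_assoc, e5]
      _ ≤ α * Real.exp (β * L / α) := by
          rw [e2]
          exact mul_le_mul_of_nonneg_left (e2 ▸ e4) hα.le
  exact lt_of_le_of_lt key (psi_lemma hβ hαβ hL)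

-- the key inequality
lemma star (hβ : 0 ≤ β) (hαβ : β < α) {L : ℝ} (hL : 0 < L) :
    (α + L) * ((α + L) ^ (β+1) - α ^ (β+1))
      < (Real.exp L - 1) * ((α + L) ^ (β+1) + β * α ^ (β+1)) := by
  have hα : 0 < α := lt_of_le_of_lt hβ hαβ
  set N : ℝ → ℝ := fun L => (α + L) ^ (β+1) - α ^ (β+1) with hN
  set D : ℝ → ℝ := fun L => (α + L) ^ (β+1) + β * α ^ (β+1) with hD
  have hv : ∀ x : ℝ, 0 ≤ x → 0 < α + x := fun x hx => by linarith
  have hDpos : ∀ x : ℝ, 0 ≤ x → 0 < D x := by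
    intro x hx
    have := amgm hβ hαβ hx
    have : 0 < (β+1) * α ^ β * (α + x) := by
      have := Real.rpow_pos_of_pos hα β
      have := hv x hx
      positivity
    simp only [hD]
    nlinarith [amgm hβ hαβ hx]
  -- derivative of the power map
  have hpow : ∀ x : ℝ, 0 ≤ x → HasDerivAt (fun y : ℝ => (α + y) ^ (β+1))
      ((β+1) * (α + x) ^ β) x := by
    intro x hx
    have h := ((hasDerivAt_id x).const_add α).rpow_const
      (p := β+1) (Or.inl (hv x hx).ne')
    simp only [id_eq] at h
    convert h using 1
    rw [show β + 1 - 1 = β by ring]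
    ring
  set Φ : ℝ → ℝ := fun L => (Real.exp L - 1) / (α + L) - N L / D L with hΦ
  have hcont : ContinuousOn Φ (Ici (0:ℝ)) := by
    have hc1 : Continuous (fun L : ℝ => (α + L) ^ (β+1)) := by
      apply Continuous.rpow_const (by continuity)
      intro x; right; linarith
    apply ContinuousOn.sub
    · apply ContinuousOn.div (Continuous.continuousOn (by continuity))
        (Continuous.continuousOn (by continuity))
      intro x hx; exact (hv x hx).ne'
    · apply ContinuousOn.div
        ((hc1.sub continuous_const).continuousOn)
        ((hc1.add continuous_const).continuousOn)
      intro x hx; exact (hDpos x hx).ne'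
  have hmono : StrictMonoOn Φ (Ici (0:ℝ)) := by
    apply strictMonoOn_of_deriv_pos (convex_Ici 0) hcont
    intro x hx
    rw [interior_Ici] at hx
    have hx0 : (0:ℝ) < x := hx
    have hvx : 0 < α + x := hv x hx0.le
    have hDx : 0 < D x := hDpos x hx0.le
    have hd1 : HasDerivAt (fun L : ℝ => (Real.exp L - 1) / (α + L))
        ((Real.exp x * (α + x) - (Real.exp x - 1) * 1) / (α + x) ^ 2) x :=
      ((Real.hasDerivAt_exp x).sub_const 1).div ((hasDerivAt_id x).const_add α) hvx.ne'
    have hd2 : HasDerivAt (fun L : ℝ => N L / D L)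
        (((β+1) * (α + x) ^ β * D x - N x * ((β+1) * (α + x) ^ β)) / (D x) ^ 2) x :=
      ((hpow x hx0.le).sub_const _).div ((hpow x hx0.le).add_const _) hDx.ne'
    rw [show Φ = (fun L : ℝ => (Real.exp L - 1) / (α + L)) - (fun L : ℝ => N L / D L) from rfl, (hd1.sub hd2).deriv]
    have hDN : D x - N x = (β+1) * α ^ (β+1) := by simp only [hN, hD]; ring
    have hnum2 : (β+1) * (α + x) ^ β * D x - N x * ((β+1) * (α + x) ^ β)
        = (β+1)^2 * (α + x) ^ β * α ^ (β+1) := by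
      have h5 : (β+1) * (α + x) ^ β * D x - N x * ((β+1) * (α + x) ^ β)
          = (β+1) * (α + x) ^ β * (D x - N x) := by ring
      rw [h5, hDN]; ring
    rw [hnum2]
    rw [sub_pos]
    -- show small/D² < big/(α+x)²
    rw [div_lt_div_iff₀ (by positivity) (by positivity)]
    have hC := claimC hβ hαβ hx0
    have hDlow := amgm hβ hαβ hx0.le
    have hZpos : 0 < (α + x) ^ β := Real.rpow_pos_of_pos hvx β
    have hαβp : 0 < α ^ β := Real.rpow_pos_of_pos hα β
    have hα1β : 0 < α ^ (1-β) := Real.rpow_pos_of_pos hα _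
    have hpow1 : α ^ (1-β) * (α ^ β * α ^ β) = α ^ (β+1) := by
      rw [← Real.rpow_add hα, ← Real.rpow_add hα]; norm_num; rw [add_comm]
    have hE : Real.exp x * (α + x) - (Real.exp x - 1) * 1
        = Real.exp x * (α + x - 1) + 1 := by ring
    rw [hE]
    calc (β+1)^2 * (α + x) ^ β * α ^ (β+1) * (α + x) ^ 2
        = (α ^ (1-β) * (α + x) ^ β) * ((β+1) * α ^ β * (α + x)) ^ 2 := by
          rw [← hpow1]; ring
      _ < (Real.exp x * (α + x - 1) + 1) * ((β+1) * α ^ β * (α + x)) ^ 2 := by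
          apply mul_lt_mul_of_pos_right hC
          positivity
      _ ≤ (Real.exp x * (α + x - 1) + 1) * D x ^ 2 := by
          apply mul_le_mul_of_nonneg_left _ (by nlinarith [hC, mul_pos hα1β hZpos])
          apply pow_le_pow_left₀ (by positivity) hDlow
  have h0 : Φ 0 = 0 := by
    simp only [hΦ, hN, hD]
    simp
  have hpos := hmono Set.self_mem_Ici (le_of_lt hL) hL
  rw [h0] at hpos
  simp only [hΦ] at hpos
  have hvL : 0 < α + L := hv L hL.le
  have hDL : 0 < D L := hDpos L hL.le
  rw [sub_pos, div_lt_div_iff₀ hDL hvL] at hpos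
  simp only [hN, hD] at hpos
  nlinarith [hpos]

end

noncomputable def gF (α β x : ℝ) : ℝ :=
  ((α + Real.log (1 + x)) ^ (β + 1) - α ^ (β + 1)) / x

noncomputable def g1F (α β x : ℝ) : ℝ :=
  ((β + 1) * (α + Real.log (1 + x)) ^ β / (1 + x) * x
    - ((α + Real.log (1 + x)) ^ (β + 1) - α ^ (β + 1))) / x ^ 2

noncomputable def g2F (α β x : ℝ) : ℝ :=
  ((β + 1) * (β * (α + Real.log (1 + x)) ^ (β - 1) - (α + Real.log (1 + x)) ^ β) / (1 + x) ^ 2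
      * x * x ^ 2
    - ((β + 1) * (α + Real.log (1 + x)) ^ β / (1 + x) * x
        - ((α + Real.log (1 + x)) ^ (β + 1) - α ^ (β + 1))) * (2 * x)) / (x ^ 2) ^ 2

section
variable {α β : ℝ}

lemma hasDerivAt_logTerm (t : ℝ) (ht : -1 < t) :
    HasDerivAt (fun x : ℝ => α + Real.log (1 + x)) (1 / (1 + t)) t := by
  have h1 : HasDerivAt (fun x : ℝ => 1 + x) 1 t := (hasDerivAt_id t).const_add 1
  have h2 := (h1.log (by linarith)).const_add α
  simpa using h2

lemma hasDerivAt_nF (hβ : 0 ≤ β) (hαβ : β < α) (t : ℝ) (ht : 0 ≤ t) :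
    HasDerivAt (fun x : ℝ => (α + Real.log (1 + x)) ^ (β + 1) - α ^ (β + 1))
      ((β + 1) * (α + Real.log (1 + t)) ^ β / (1 + t)) t := by
  have h := ((hasDerivAt_logTerm (α := α) t (by linarith)).rpow_const
    (p := β + 1) (Or.inr (by linarith))).sub_const (α ^ (β + 1))
  refine h.congr_deriv ?_
  rw [show β + 1 - 1 = β by ring]
  ring

lemma hasDerivAt_n1F (hβ : 0 ≤ β) (hαβ : β < α) (t : ℝ) (ht : 0 ≤ t) :
    HasDerivAt (fun x : ℝ => (β + 1) * (α + Real.log (1 + x)) ^ β / (1 + x))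
      ((β + 1) * (β * (α + Real.log (1 + t)) ^ (β - 1) - (α + Real.log (1 + t)) ^ β)
        / (1 + t) ^ 2) t := by
  have hα : 0 < α := lt_of_le_of_lt hβ hαβ
  have hU : 0 < α + Real.log (1 + t) := by
    have := Real.log_nonneg (by linarith : (1:ℝ) ≤ 1 + t)
    linarith
  have h1 := ((hasDerivAt_logTerm (α := α) t (by linarith)).rpow_const
    (p := β) (Or.inl hU.ne')).const_mul (β + 1)
  have h2 : HasDerivAt (fun x : ℝ => 1 + x) 1 t := (hasDerivAt_id t).const_add 1
  have h := h1.div h2 (by linarith : (1:ℝ) + t ≠ 0)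
  refine h.congr_deriv ?_
  have h1t : (1:ℝ) + t ≠ 0 := by linarith
  field_simp

lemma continuousOn_gF (hβ : 0 ≤ β) (hαβ : β < α) :
    ContinuousOn (gF α β) (Ioi (0:ℝ)) := by
  intro x hx
  have hx0 : (0:ℝ) < x := hx
  apply ContinuousWithinAt.div
  · exact ((hasDerivAt_nF hβ hαβ x hx0.le).continuousAt).continuousWithinAt
  · exact continuousWithinAt_id
  · exact hx0.ne'

lemma intervalIntegrable_gF (hβ : 0 ≤ β) (hαβ : β < α) {t : ℝ} (ht : 0 < t) :
    IntervalIntegrable (gF α β) volume 0 t := by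
  have hα : 0 < α := lt_of_le_of_lt hβ hαβ
  rw [intervalIntegrable_iff_integrableOn_Ioc_of_le ht.le]
  apply MeasureTheory.Integrable.mono'
    (g := fun _ : ℝ => (β + 1) * (α + t) ^ β)
    (MeasureTheory.integrableOn_const measure_Ioc_lt_top.ne)
    (((continuousOn_gF hβ hαβ).mono Ioc_subset_Ioi_self).aestronglyMeasurable
      measurableSet_Ioc)
  filter_upwards [MeasureTheory.ae_restrict_mem measurableSet_Ioc] with x hx
  obtain ⟨hx0, hxt⟩ := hx
  set L := Real.log (1 + x) with hL
  have hL0 : 0 ≤ L := Real.log_nonneg (by linarith)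
  have hLx : L ≤ x := by
    have := Real.log_le_sub_one_of_pos (show (0:ℝ) < 1 + x by linarith)
    linarith
  set U := α + L with hU
  have hUpos : 0 < U := by simp only [hU]; linarith
  have hUle : U ≤ α + t := by simp only [hU]; linarith
  have hnum0 : 0 ≤ U ^ (β + 1) - α ^ (β + 1) := by
    have := Real.rpow_le_rpow hα.le (show α ≤ U by simp only [hU]; linarith)
      (by linarith : (0:ℝ) ≤ β + 1)
    linarith
  have hnumU : U ^ (β + 1) - α ^ (β + 1) ≤ (β + 1) * (U - α) * U ^ β :=
    bern_upper hα.le (by simp only [hU]; linarith) hUpos hβ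
  have hZle : U ^ β ≤ (α + t) ^ β := Real.rpow_le_rpow hUpos.le hUle hβ
  have hbound : U ^ (β + 1) - α ^ (β + 1) ≤ (β + 1) * (α + t) ^ β * x := by
    calc U ^ (β + 1) - α ^ (β + 1) ≤ (β + 1) * (U - α) * U ^ β := hnumU
      _ = (β + 1) * L * U ^ β := by simp only [hU]; ring
      _ ≤ (β + 1) * x * (α + t) ^ β := by
          apply mul_le_mul (by nlinarith) hZle (Real.rpow_nonneg hUpos.le β) (by positivity)
      _ = (β + 1) * (α + t) ^ β * x := by ring
  have hgval : gF α β x = (U ^ (β + 1) - α ^ (β + 1)) / x := rfl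
  rw [Real.norm_eq_abs, hgval, abs_of_nonneg (by positivity)]
  rw [div_le_iff₀ hx0]
  exact hbound

lemma hasDerivAt_fFJ (hβ : 0 ≤ β) (hαβ : β < α) {t : ℝ} (ht : 0 < t) :
    HasDerivAt (fFJ α β) (1 / ((β + 1) * α ^ β) * gF α β t) t := by
  have h := intervalIntegral.integral_hasDerivAt_right
    (intervalIntegrable_gF hβ hαβ ht)
    (ContinuousOn.stronglyMeasurableAtFilter isOpen_Ioi (continuousOn_gF hβ hαβ) t ht)
    ((continuousOn_gF hβ hαβ).continuousAt (Ioi_mem_nhds ht))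
  have h2 := h.const_mul (1 / ((β + 1) * α ^ β))
  exact h2

lemma hasDerivAt_F1 (hβ : 0 ≤ β) (hαβ : β < α) {t : ℝ} (ht : 0 < t) :
    HasDerivAt (fun x => 1 / ((β + 1) * α ^ β) * gF α β x)
      (1 / ((β + 1) * α ^ β) * g1F α β t) t := by
  have hnum := ((hasDerivAt_n1F hβ hαβ t ht.le).mul (hasDerivAt_id t)).sub
    (hasDerivAt_nF hβ hαβ t ht.le)
  have hden : HasDerivAt (fun x : ℝ => x ^ 2) (2 * t) t := by
    simpa using hasDerivAt_pow 2 t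
  have h : HasDerivAt (fun x => gF α β x) (g1F α β t) t := by
    have hq := (((hasDerivAt_nF hβ hαβ t ht.le)).div (hasDerivAt_id t) ht.ne')
    simp only [gF]
    refine hq.congr_deriv ?_
    simp only [g1F, id_eq]
    ring
  exact h.const_mul _

lemma hasDerivAt_F2 (hβ : 0 ≤ β) (hαβ : β < α) {t : ℝ} (ht : 0 < t) :
    HasDerivAt (fun x => 1 / ((β + 1) * α ^ β) * g1F α β x)
      (1 / ((β + 1) * α ^ β) * g2F α β t) t := by
  have hnum := ((hasDerivAt_n1F hβ hαβ t ht.le).mul (hasDerivAt_id t)).sub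
    (hasDerivAt_nF hβ hαβ t ht.le)
  have hden : HasDerivAt (fun x : ℝ => x ^ 2) (2 * t) t := by
    simpa using hasDerivAt_pow 2 t
  have hq := hnum.div hden (pow_ne_zero 2 ht.ne')
  have h : HasDerivAt (fun x => g1F α β x) (g2F α β t) t := by
    simp only [g1F]
    refine hq.congr_deriv ?_
    simp only [g2F, id_eq, Pi.mul_apply, Pi.sub_apply]
    ring
  exact h.const_mul _

end

theorem stmt_12 (α β : ℝ) (hβ : 0 ≤ β) (hαβ : β < α) (s : ℝ) (hs : 0 < s) :
    deriv (deriv (fFJ α β)) s + s * deriv (deriv (deriv (fFJ α β))) s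
      - s * (deriv (deriv (fFJ α β)) s) ^ 2 / deriv (fFJ α β) s < 0 := by
  have hα : 0 < α := lt_of_le_of_lt hβ hαβ
  set C : ℝ := 1 / ((β + 1) * α ^ β) with hCdef
  have hCpos : 0 < C := by
    have := Real.rpow_pos_of_pos hα β
    rw [hCdef]; positivity
  -- derivative identification
  have e1 : ∀ t : ℝ, 0 < t → deriv (fFJ α β) t = C * gF α β t :=
    fun t ht => (hasDerivAt_fFJ hβ hαβ ht).deriv
  have e2 : ∀ t : ℝ, 0 < t → deriv (deriv (fFJ α β)) t = C * g1F α β t := by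
    intro t ht
    have heq : deriv (fFJ α β) =ᶠ[nhds t] (fun x => C * gF α β x) :=
      eventuallyEq_of_mem (Ioi_mem_nhds ht) (fun y hy => e1 y hy)
    rw [heq.deriv_eq]
    exact (hasDerivAt_F1 hβ hαβ ht).deriv
  have e3 : deriv (deriv (deriv (fFJ α β))) s = C * g2F α β s := by
    have heq : deriv (deriv (fFJ α β)) =ᶠ[nhds s] (fun x => C * g1F α β x) :=
      eventuallyEq_of_mem (Ioi_mem_nhds hs) (fun y hy => e2 y hy)
    rw [heq.deriv_eq]
    exact (hasDerivAt_F2 hβ hαβ hs).deriv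
  rw [e1 s hs, e2 s hs, e3]
  -- basic quantities
  have h1s : (0:ℝ) < 1 + s := by linarith
  have hLpos : 0 < Real.log (1 + s) := Real.log_pos (by linarith)
  set U : ℝ := α + Real.log (1 + s) with hUdef
  have hαU : α < U := by rw [hUdef]; linarith
  have hUpos : 0 < U := by linarith
  have hYX : α ^ (β + 1) < U ^ (β + 1) :=
    Real.rpow_lt_rpow hα.le hαU (by linarith)
  -- the key inequality, in s-form
  have hstar : U * (U ^ (β+1) - α ^ (β+1))
      < s * (U ^ (β+1) + β * α ^ (β+1)) := by
    have h := star hβ hαβ (α := α) (β := β) hLpos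
    rw [Real.exp_log h1s] at h
    simpa [hUdef] using h
  have hkey : (U ^ (β+1) - α ^ (β+1)) * (s * β + U) - s * ((β+1) * U ^ (β+1)) < 0 := by
    nlinarith [hstar]
  -- power relations
  have hXZ : U ^ (β + 1) = U ^ β * U := Real.rpow_add_one hUpos.ne' β
  have hZZ1 : U ^ β = U ^ (β - 1) * U := by
    rw [← Real.rpow_add_one hUpos.ne' (β - 1)]; norm_num
  have hZ1pos : 0 < U ^ (β - 1) := Real.rpow_pos_of_pos hUpos _
  -- unfold everything
  simp only [gF, g1F, g2F, ← hUdef]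
  rw [hXZ, hZZ1]
  -- now a rational function inequality in atoms U, U^(β-1), α^(β+1), α^β, s, β
  set Z1 : ℝ := U ^ (β - 1) with hZ1def
  set Y : ℝ := α ^ (β + 1) with hYdef
  set W : ℝ := α ^ β with hWdef
  have hWpos : 0 < W := Real.rpow_pos_of_pos hα β
  have hHpos : 0 < Z1 * U * U - Y := by
    have : U ^ (β+1) = Z1 * U * U := by rw [hXZ, hZZ1]
    rw [← this]; linarith
  have hkey2 : (Z1 * U * U - Y) * (s * β + U) - s * ((β+1) * (Z1 * U * U)) < 0 := by
    have hx : U ^ (β+1) = Z1 * U * U := by rw [hXZ, hZZ1]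
    rw [← hx]; exact hkey
  have hEq : C * (((β + 1) * (Z1 * U) / (1 + s) * s - (Z1 * U * U - Y)) / s ^ 2)
      + s * (C * (((β + 1) * (β * Z1 - Z1 * U) / (1 + s) ^ 2 * s * s ^ 2
          - ((β + 1) * (Z1 * U) / (1 + s) * s - (Z1 * U * U - Y)) * (2 * s)) / (s ^ 2) ^ 2))
      - s * (C * (((β + 1) * (Z1 * U) / (1 + s) * s - (Z1 * U * U - Y)) / s ^ 2)) ^ 2
        / (C * ((Z1 * U * U - Y) / s))
      = (C * (β + 1) * Z1 * s * ((Z1 * U * U - Y) * (s * β + U) - s * ((β+1) * (Z1 * U * U))))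
        / (s ^ 2 * (Z1 * U * U - Y) * (1 + s) ^ 2) := by
    have hC0 : C ≠ 0 := hCpos.ne'
    have hZY : Z1 * U * U - Y ≠ 0 := by
      have hx : U ^ (β+1) = Z1 * U * U := by rw [hXZ, hZZ1]
      rw [← hx]; linarith
    have hs1 : (1:ℝ) + s ≠ 0 := by linarith
    have hZY2 : Z1 * U ^ 2 - Y ≠ 0 := by rw [pow_two, ← mul_assoc]; exact hZY
    field_simp
    ring
  rw [hEq]
  apply div_neg_of_neg_of_pos
  · have hp : 0 < C * (β + 1) * Z1 * s := by positivity
    calc C * (β + 1) * Z1 * s * ((Z1 * U * U - Y) * (s * β + U) - s * ((β+1) * (Z1 * U * U)))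
        < C * (β + 1) * Z1 * s * 0 := by
          exact mul_lt_mul_of_pos_left hkey2 hp
      _ = 0 := by ring
  · positivity
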